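/- Let d = 3 and consider the 3-player linear game with inputs x, y, z ∈ ℤ₃ satisfying the promise x + y + z ≡ 0 (mod 3), uniformly distributed over the 9 valid triples, and winning condition a + b + c ≡ x·y·z (mod 3). Then the GHZ₃ quantum strategy wins with probability 1: explicitly, with the state |GHZ₃⟩ = (|000⟩+|111⟩+|222⟩)/√3 and the projective measurements onto the vectors given by |A_x^a⟩, |B_y^b⟩, |C_z^c⟩ (each a Fourier-type basis of ℂ³ with phases specified by powers of ζ = e^{2πi/3}), the probability that the outcomes satisfy a + b + c ≡ x·y·z mod 3 equals 1 for every valid input triple. -/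

import Mathlib

open Finset

/-- `ζ^r = e^{2πir/3}` (with `r` possibly fractional). -/
noncomputable def zp (r : ℝ) : ℂ := Complex.exp (2 * Real.pi * Complex.I * (r : ℂ) / 3)

/-- Alice's (and Bob's) measurement basis vectors `|A_x^a⟩` (unnormalized table). -/
noncomputable def tA : Fin 3 → Fin 3 → Fin 3 → ℂ :=
  ![![![zp 0, zp (4/3), zp 0], ![zp 2, zp (7/3), zp 0], ![zp 1, zp (1/3), zp 0]],
    ![![zp (1/3), zp 0, zp 0], ![zp (7/3), zp 1, zp 0], ![zp (4/3), zp 2, zp 0]],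
    ![![zp (8/3), zp (8/3), zp 0], ![zp (5/3), zp (2/3), zp 0], ![zp (2/3), zp (5/3), zp 0]]]

/-- Charlie's measurement basis vectors `|C_z^c⟩` (unnormalized table). -/
noncomputable def tC : Fin 3 → Fin 3 → Fin 3 → ℂ :=
  ![![![zp 0, zp (1/3), zp 0], ![zp 2, zp (4/3), zp 0], ![zp 1, zp (7/3), zp 0]],
    ![![zp (1/3), zp 2, zp 0], ![zp (7/3), zp 0, zp 0], ![zp (4/3), zp 1, zp 0]],
    ![![zp (8/3), zp (5/3), zp 0], ![zp (5/3), zp (8/3), zp 0], ![zp (2/3), zp (2/3), zp 0]]]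

/-- Normalized vector `|A_x^a⟩` (also used for Bob). -/
noncomputable def Avec (x a : Fin 3) : Fin 3 → ℂ := fun i => tA x a i / (Real.sqrt 3 : ℂ)

/-- Normalized vector `|C_z^c⟩`. -/
noncomputable def Cvec (z c : Fin 3) : Fin 3 → ℂ := fun i => tC z c i / (Real.sqrt 3 : ℂ)

/-- The state `|GHZ₃⟩ = (|000⟩+|111⟩+|222⟩)/√3`. -/
noncomputable def ghz3 : Fin 3 × Fin 3 × Fin 3 → ℂ := fun w =>
  if w.1 = w.2.1 ∧ w.2.1 = w.2.2 then (1 : ℂ) / (Real.sqrt 3 : ℂ) else 0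

/-- The outcome probability `P(a,b,c|x,y,z) = |⟨GHZ₃| (|A_x^a⟩⊗|B_y^b⟩⊗|C_z^c⟩)|²`. -/
noncomputable def Pout (x y z a b c : Fin 3) : ℝ :=
  ‖∑ w : Fin 3 × Fin 3 × Fin 3,
    (starRingEnd ℂ) (ghz3 w) * (Avec x a w.1 * Avec y b w.2.1 * Cvec z c w.2.2)‖ ^ 2

/- ### Auxiliary machinery -/

lemma zp_eq' (r : ℝ) : zp r = Complex.exp ((2 * Real.pi * r / 3 : ℝ) * Complex.I) := by
  unfold zp; congr 1; push_cast; ring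

lemma zp_abs (r : ℝ) : ‖zp r‖ = 1 := by
  rw [zp_eq', Complex.norm_exp_ofReal_mul_I]

lemma zp_mul (r s : ℝ) : zp r * zp s = zp (r + s) := by
  unfold zp; rw [← Complex.exp_add]; congr 1; push_cast; ring

lemma zp_pow (r : ℝ) (n : ℕ) : zp r ^ n = zp (n * r) := by
  induction n with
  | zero => simp [zp]
  | succ k ih => rw [pow_succ, ih, zp_mul]; congr 1; push_cast; ring

/-- `ν = ζ^{1/3}`, a primitive ninth root of unity. -/
noncomputable def nu : ℂ := zp (1/3)

lemma nu_nine : nu ^ 9 = 1 := by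
  rw [nu, zp_pow]
  have h : (2 * Real.pi * Complex.I * (((9:ℕ) * (1/3 : ℝ) : ℝ) : ℂ) / 3)
      = 2 * Real.pi * Complex.I := by push_cast; ring
  rw [zp, h, Complex.exp_two_pi_mul_I]

lemma nu_pow_mod (m : ℕ) : nu ^ (m % 9) = nu ^ m := by
  conv_rhs => rw [← Nat.div_add_mod m 9]
  rw [pow_add, pow_mul, nu_nine, one_pow, one_mul]

lemma nu_abs_pow (m : ℕ) : ‖nu ^ m‖ = 1 := by
  rw [norm_pow, nu, zp_abs, one_pow]

/-- Exponent table for `tA`: `tA x a i = ν ^ (eA x a i)`. -/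
def eA : Fin 3 → Fin 3 → Fin 3 → ℕ :=
  ![![![0,4,0], ![6,7,0], ![3,1,0]],
    ![![1,0,0], ![7,3,0], ![4,6,0]],
    ![![8,8,0], ![5,2,0], ![2,5,0]]]

/-- Exponent table for `tC`: `tC z c i = ν ^ (eC z c i)`. -/
def eC : Fin 3 → Fin 3 → Fin 3 → ℕ :=
  ![![![0,1,0], ![6,4,0], ![3,7,0]],
    ![![1,6,0], ![7,0,0], ![4,3,0]],
    ![![8,5,0], ![5,8,0], ![2,2,0]]]

lemma tA_eq (x a i : Fin 3) : tA x a i = nu ^ eA x a i := by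
  fin_cases x <;> fin_cases a <;> fin_cases i <;>
    simp only [tA, eA, nu, Matrix.cons_val_zero, Matrix.cons_val_one, Matrix.head_cons,
      Matrix.cons_val_two, Matrix.tail_cons, zp_pow] <;> norm_num

lemma tC_eq (z c i : Fin 3) : tC z c i = nu ^ eC z c i := by
  fin_cases z <;> fin_cases c <;> fin_cases i <;>
    simp only [tC, eC, nu, Matrix.cons_val_zero, Matrix.cons_val_one, Matrix.head_cons,
      Matrix.cons_val_two, Matrix.tail_cons, zp_pow] <;> norm_num

/-- The key arithmetical fact, checked by brute force: on winning outcomes for valid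
inputs, the three phase exponents agree mod 9. -/
lemma key_exponents : ∀ x y z a b c : Fin 3, x + y + z = 0 → a + b + c = x * y * z →
    (eA x a 1 + eA y b 1 + eC z c 1) % 9 = (eA x a 0 + eA y b 0 + eC z c 0) % 9 ∧
    (eA x a 2 + eA y b 2 + eC z c 2) % 9 = (eA x a 0 + eA y b 0 + eC z c 0) % 9 := by
  decide

lemma sqrt3C_sq : ((Real.sqrt 3 : ℝ) : ℂ) ^ 2 = 3 := by
  rw [← Complex.ofReal_pow, Real.sq_sqrt (by norm_num : (3:ℝ) ≥ 0)]
  norm_num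

lemma sqrt3C_ne : ((Real.sqrt 3 : ℝ) : ℂ) ≠ 0 := by
  intro h
  have := sqrt3C_sq
  rw [h] at this
  norm_num at this

lemma combine (p q r : ℕ) :
    (((Real.sqrt 3 : ℝ) : ℂ))⁻¹ * (nu ^ p / (Real.sqrt 3 : ℂ) * (nu ^ q / (Real.sqrt 3 : ℂ)) *
      (nu ^ r / (Real.sqrt 3 : ℂ))) = nu ^ (p + q + r) * (1 / 9) := by
  have h2 := sqrt3C_sq
  have hne := sqrt3C_ne
  field_simp
  rw [pow_add, pow_add]
  have h4 : ((Real.sqrt 3 : ℝ) : ℂ) ^ 4 = 9 := by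
    rw [show (4:ℕ) = 2 * 2 from rfl, pow_mul, h2]; norm_num
  linear_combination (-(nu ^ p * nu ^ q * nu ^ r)) * h4

lemma Pout_win (x y z a b c : Fin 3)
    (h1 : (eA x a 1 + eA y b 1 + eC z c 1) % 9 = (eA x a 0 + eA y b 0 + eC z c 0) % 9)
    (h2 : (eA x a 2 + eA y b 2 + eC z c 2) % 9 = (eA x a 0 + eA y b 0 + eC z c 0) % 9) :
    Pout x y z a b c = 1 / 9 := by
  unfold Pout ghz3 Avec Cvec
  rw [Fintype.sum_prod_type]
  simp only [Fintype.sum_prod_type, Fin.sum_univ_three]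
  norm_num [Fin.ext_iff]
  rw [tA_eq x a 0, tA_eq x a 1, tA_eq x a 2, tA_eq y b 0, tA_eq y b 1, tA_eq y b 2,
    tC_eq z c 0, tC_eq z c 1, tC_eq z c 2, combine, combine, combine]
  rw [← nu_pow_mod (eA x a 1 + eA y b 1 + eC z c 1), h1,
      ← nu_pow_mod (eA x a 2 + eA y b 2 + eC z c 2), h2, nu_pow_mod]
  rw [← add_mul, ← add_mul]
  rw [show nu ^ (eA x a 0 + eA y b 0 + eC z c 0) + nu ^ (eA x a 0 + eA y b 0 + eC z c 0) +
      nu ^ (eA x a 0 + eA y b 0 + eC z c 0) = 3 * nu ^ (eA x a 0 + eA y b 0 + eC z c 0)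
      from by ring]
  rw [norm_mul, norm_mul, nu_abs_pow]
  norm_num

/-- For the 3-player game with inputs `x + y + z ≡ 0 (mod 3)` and winning
condition `a + b + c ≡ x·y·z (mod 3)`, the GHZ₃ strategy wins with probability 1 on every
valid input triple. -/
theorem ghz3_strategy_wins (x y z : Fin 3) (hxyz : x + y + z = 0) :
    ∑ a : Fin 3, ∑ b : Fin 3, ∑ c : Fin 3,
      (if a + b + c = x * y * z then Pout x y z a b c else 0) = 1 := by
  have hinner : ∀ a b : Fin 3,
      (∑ c : Fin 3, if a + b + c = x * y * z then Pout x y z a b c else 0) = 1 / 9 := by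
    intro a b
    have hcond : ∀ c : Fin 3, (a + b + c = x * y * z) ↔ (c = x * y * z - (a + b)) := by
      intro c
      rw [eq_sub_iff_add_eq, show c + (a + b) = a + b + c from by abel]
    simp only [hcond]
    rw [Finset.sum_ite_eq' univ]
    simp only [mem_univ, if_true]
    have hw : a + b + (x * y * z - (a + b)) = x * y * z := by abel
    exact Pout_win x y z a b _ (key_exponents x y z a b _ hxyz hw).1
      (key_exponents x y z a b _ hxyz hw).2
  simp only [hinner, Fin.sum_univ_three]
  norm_num
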